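/- Let A be a complex Banach *-algebra with identity, let a ∈ A have a generalized core-EP inverse a^⊕, and let x ∈ A, λ, μ ∈ ℂ \ {0} satisfy a x = λ x a and a* x = μ x a*. Then a^⊕ x = λ^{-1} x a^⊕. -/

import Mathlib

open Filter Topology

variable {A : Type*} [NormedRing A] [StarRing A] [NormedAlgebra ℂ A] [StarModule ℂ A]
  [CompleteSpace A]

/-- quasinilpotent: `lim ‖z^n‖^(1/n) = 0` -/
def IsQNil (z : A) : Prop :=
  Tendsto (fun n : ℕ => ‖z ^ n‖ ^ ((1 : ℝ) / n)) atTop (𝓝 0)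

/-- generalized Drazin inverse -/
def IsGD (a x : A) : Prop :=
  a * x ^ 2 = x ∧ a * x = x * a ∧ IsQNil (a - a ^ 2 * x)

/-- generalized core-EP inverse -/
def IsGCEP (a x : A) : Prop :=
  x = a * x ^ 2 ∧ star (a * x) = a * x ∧
    Tendsto (fun n : ℕ => ‖a ^ n - x * a ^ (n + 1)‖ ^ ((1 : ℝ) / n)) atTop (𝓝 0)

private lemma key_zero {c : A} {w : ℕ → A} {C K : ℝ} (hC : 0 < C) (hK : 0 ≤ K)
    (hw : Tendsto (fun n : ℕ => ‖w n‖ ^ ((1 : ℝ) / n)) atTop (𝓝 0))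
    (hb : ∀ n : ℕ, ‖c‖ ≤ C ^ n * ‖w n‖ * K) : c = 0 := by
  by_contra hc
  have hc' : 0 < ‖c‖ := norm_pos_iff.mpr hc
  rcases hK.eq_or_lt with hK0 | hKpos
  · have h0 := hb 0
    rw [← hK0, mul_zero] at h0
    linarith
  set ε : ℝ := (2 * C)⁻¹ with hε_def
  have hε : 0 < ε := by positivity
  have hgeo : Tendsto (fun n : ℕ => (1 / 2 : ℝ) ^ n * K) atTop (𝓝 0) := by
    simpa using (tendsto_pow_atTop_nhds_zero_of_lt_one (by norm_num : (0:ℝ) ≤ 1/2)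
      (by norm_num : (1/2 : ℝ) < 1)).mul_const K
  obtain ⟨N1, hN1⟩ := Metric.tendsto_atTop.mp hw ε hε
  obtain ⟨N2, hN2⟩ := Metric.tendsto_atTop.mp hgeo ‖c‖ hc'
  set n : ℕ := max (max N1 N2) 1 with hn_def
  have hn1 : 1 ≤ n := le_max_right _ _
  have hnN1 : N1 ≤ n := le_trans (le_max_left _ _) (le_max_left _ _)
  have hnN2 : N2 ≤ n := le_trans (le_max_right _ _) (le_max_left _ _)
  have hn0 : (n : ℝ) ≠ 0 := by positivity
  have h1 : ‖w n‖ ^ ((1 : ℝ) / n) < ε := by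
    have := hN1 n hnN1
    rwa [Real.dist_eq, sub_zero, abs_of_nonneg (Real.rpow_nonneg (norm_nonneg _) _)] at this
  have h2 : (1 / 2 : ℝ) ^ n * K < ‖c‖ := by
    have := hN2 n hnN2
    rw [Real.dist_eq, sub_zero, abs_of_nonneg (by positivity)] at this
    linarith [abs_nonneg ((1/2:ℝ)^n * K)]
  have hwn : ‖w n‖ < ε ^ n := by
    have h3 : (‖w n‖ ^ ((1 : ℝ) / n)) ^ (n : ℝ) < ε ^ (n : ℝ) :=
      Real.rpow_lt_rpow (Real.rpow_nonneg (norm_nonneg _) _) h1 (by positivity)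
    rw [← Real.rpow_mul (norm_nonneg _), one_div, inv_mul_cancel₀ hn0, Real.rpow_one,
      Real.rpow_natCast] at h3
    exact h3
  have hCε : C * ε = 1 / 2 := by
    rw [hε_def]
    field_simp
  have hchain : ‖c‖ < ‖c‖ := by
    calc ‖c‖ ≤ C ^ n * ‖w n‖ * K := hb n
      _ < C ^ n * ε ^ n * K := by
          apply mul_lt_mul_of_pos_right _ hKpos
          exact mul_lt_mul_of_pos_left hwn (pow_pos hC n)
      _ = (1 / 2 : ℝ) ^ n * K := by rw [← mul_pow, hCε]
      _ < ‖c‖ := h2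
  exact absurd hchain (lt_irrefl _)

private lemma helper_comm {a g y : A} {c : ℂ} (hc : c ≠ 0)
    (hg1 : g = a * g ^ 2)
    (hg3 : Tendsto (fun n : ℕ => ‖a ^ n - g * a ^ (n + 1)‖ ^ ((1 : ℝ) / n)) atTop (𝓝 0))
    (hy : a * y = c • (y * a)) : y * g = g * (a * (y * g)) := by
  have hpow : ∀ n : ℕ, a ^ n * g ^ (n + 1) = g := by
    intro n
    induction n with
    | zero => simp
    | succ n ih =>
        rw [pow_succ a n, show n + 1 + 1 = 2 + n from by omega, pow_add, mul_assoc,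
          ← mul_assoc a, ← hg1, ← pow_succ', ih]
  have hay : ∀ n : ℕ, a ^ n * y = c ^ n • (y * a ^ n) := by
    intro n
    induction n with
    | zero => simp
    | succ n ih =>
        rw [pow_succ a n, mul_assoc, hy, mul_smul_comm, ← mul_assoc, ih, smul_mul_assoc,
          smul_smul, mul_assoc, ← pow_succ, ← pow_succ']
  have hya : ∀ n : ℕ, y * a ^ n = (c⁻¹) ^ n • (a ^ n * y) := by
    intro n
    rw [hay n, smul_smul, ← mul_pow, inv_mul_cancel₀ hc, one_pow, one_smul]
  have hd : ∀ n : ℕ, y * g - g * (a * (y * g)) =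
      (c⁻¹) ^ n • ((a ^ n - g * a ^ (n + 1)) * (y * g ^ (n + 1))) := by
    intro n
    have e1 : y * g = (c⁻¹) ^ n • (a ^ n * (y * g ^ (n + 1))) := by
      conv_lhs => rw [← hpow n]
      rw [← mul_assoc, hya n, smul_mul_assoc, mul_assoc]
    have e2 : g * (a * (y * g)) = (c⁻¹) ^ n • (g * a ^ (n + 1) * (y * g ^ (n + 1))) := by
      conv_lhs => rw [e1]
      rw [mul_smul_comm, mul_smul_comm]
      congr 1
      rw [← mul_assoc, ← mul_assoc, mul_assoc g a, ← pow_succ']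
    rw [e2, e1, ← smul_sub, ← sub_mul]
  have hb : ∀ n : ℕ, ‖y * g - g * (a * (y * g))‖ ≤
      (‖c⁻¹‖ * (‖g‖ + 1)) ^ n * ‖a ^ n - g * a ^ (n + 1)‖ * ((‖y‖ + 1) * (‖g‖ + 1)) := by
    intro n
    rw [hd n, norm_smul, norm_pow]
    calc ‖c⁻¹‖ ^ n * ‖(a ^ n - g * a ^ (n + 1)) * (y * g ^ (n + 1))‖
        ≤ ‖c⁻¹‖ ^ n * (‖a ^ n - g * a ^ (n + 1)‖ * (‖y‖ * ‖g‖ ^ (n + 1))) := by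
          gcongr
          refine (norm_mul_le _ _).trans ?_
          gcongr
          refine (norm_mul_le _ _).trans ?_
          gcongr
          exact norm_pow_le' _ (Nat.succ_pos n)
      _ ≤ ‖c⁻¹‖ ^ n * (‖a ^ n - g * a ^ (n + 1)‖ * ((‖y‖ + 1) * (‖g‖ + 1) ^ (n + 1))) := by
          gcongr <;> linarith [norm_nonneg y, norm_nonneg g]
      _ = (‖c⁻¹‖ * (‖g‖ + 1)) ^ n * ‖a ^ n - g * a ^ (n + 1)‖ * ((‖y‖ + 1) * (‖g‖ + 1)) := by
          rw [mul_pow]; ring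
  have hC : 0 < ‖c⁻¹‖ * (‖g‖ + 1) := by
    have : c⁻¹ ≠ 0 := inv_ne_zero hc
    have h0 : 0 < ‖c⁻¹‖ := norm_pos_iff.mpr this
    positivity
  have hK : (0 : ℝ) ≤ (‖y‖ + 1) * (‖g‖ + 1) := by positivity
  have := key_zero hC hK hg3 hb
  exact sub_eq_zero.mp this

theorem stmt4 (a x ag : A) (l m : ℂ) (hl : l ≠ 0) (hm : m ≠ 0)
    (hg : IsGCEP a ag)
    (h1 : a * x = l • (x * a)) (h2 : star a * x = m • (x * star a)) :
    ag * x = l⁻¹ • (x * ag) := by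
  obtain ⟨hg1, hg2, hg3⟩ := hg
  -- g a g = g
  have L1 : ag * (a * ag) = ag := by
    have h := helper_comm (one_ne_zero) hg1 hg3 (y := (1 : A)) (c := 1) (by simp)
    simpa using h.symm
  -- x * ag = l • (ag * (x * (a * ag)))
  have E1 : x * ag = l • (ag * (x * (a * ag))) := by
    calc x * ag = ag * (a * (x * ag)) := helper_comm hl hg1 hg3 h1
      _ = ag * ((a * x) * ag) := by rw [mul_assoc]
      _ = ag * ((l • (x * a)) * ag) := by rw [h1]
      _ = l • (ag * (x * (a * ag))) := by
          rw [smul_mul_assoc, mul_smul_comm, mul_assoc]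
  -- star hypothesis transformed
  have hxs : star x * a = (star m) • (a * star x) := by
    have h := congrArg star h2
    simpa [star_mul, star_star, star_smul] using h
  have h2' : a * star x = (star m)⁻¹ • (star x * a) := by
    rw [hxs, smul_smul, inv_mul_cancel₀ (star_ne_zero.mpr hm), one_smul]
  have hS : star x * ag = ag * (a * (star x * ag)) :=
    helper_comm (inv_ne_zero (star_ne_zero.mpr hm)) hg1 hg3 h2'
  have e2a : star x * (a * ag) = (star m) • (a * (star x * ag)) := by
    rw [← mul_assoc, hxs, smul_mul_assoc, mul_assoc]
  have E2 : star x * (a * ag) = (a * ag) * (star x * (a * ag)) := by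
    calc star x * (a * ag) = (star m) • (a * (star x * ag)) := e2a
      _ = (star m) • (a * (ag * (a * (star x * ag)))) := by rw [← hS]
      _ = (a * ag) * ((star m) • (a * (star x * ag))) := by
          rw [mul_smul_comm, mul_assoc]
      _ = (a * ag) * (star x * (a * ag)) := by rw [← e2a]
  have E3 : (a * ag) * x = (a * ag) * x * (a * ag) := by
    have hp : star ag * star a = a * ag := by rw [← star_mul]; exact hg2
    have h := congrArg star E2
    simp only [star_mul, star_star, hp] at h
    exact h
  have E4 : ag * x = ag * (x * (a * ag)) := by
    calc ag * x = (ag * (a * ag)) * x := by rw [L1]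
      _ = ag * ((a * ag) * x) := by simp only [mul_assoc]
      _ = ag * ((a * ag) * x * (a * ag)) := by conv_lhs => rw [E3]
      _ = (ag * (a * ag)) * (x * (a * ag)) := by simp only [mul_assoc]
      _ = ag * (x * (a * ag)) := by rw [L1]
  have E1' : x * ag = l • (ag * x) := by rw [E1, ← E4]
  rw [E1', smul_smul, inv_mul_cancel₀ hl, one_smul]
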